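/- Let X_1,…,X_T be i.i.d. random variables with values in [0,1]^m and let 𝓛_L be the class of real-valued L-Lipschitz functions on [0,1]^m. Then for every ε > 0, P( sup_{f∈𝓛_L} |(1/T)∑_{i=1}^T f(X_i) − E f(X)| > ε ) ≤ 2 D^{−m/(m+2)} exp( −log(T)·[C₁ D − 1] ), where D = (T/log T)·(ε/(C₂ L))^{m+2} and C₁, C₂ are positive universal constants (depending only on m). -/

import Mathlib

open MeasureTheory ProbabilityTheory Finset Real


lemma aux_convex {l z : ℝ} (hz : |z| ≤ 2) :
    Real.exp (l * z) ≤ Real.cosh (2*l) + (z/2) * Real.sinh (2*l) := by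
  obtain ⟨hz1, hz2⟩ := abs_le.1 hz
  have h := convexOn_exp.2 (Set.mem_univ (-(2*l))) (Set.mem_univ (2*l))
    (by linarith : (0:ℝ) ≤ (2 - z)/4) (by linarith : (0:ℝ) ≤ (2 + z)/4) (by ring)
  simp only [smul_eq_mul] at h
  have harg : (2 - z)/4 * -(2*l) + (2 + z)/4 * (2*l) = l * z := by ring
  rw [harg] at h
  rw [Real.cosh_eq, Real.sinh_eq]
  calc Real.exp (l*z) ≤ (2 - z)/4 * Real.exp (-(2*l)) + (2 + z)/4 * Real.exp (2*l) := h
    _ = (Real.exp (2*l) + Real.exp (-(2*l)))/2 + z/2 * ((Real.exp (2*l) - Real.exp (-(2*l)))/2) := by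
        ring

lemma aux_mgf {Ω : Type} [MeasurableSpace Ω] (P : Measure Ω) [IsProbabilityMeasure P]
    (Z : Ω → ℝ) (hZm : Measurable Z) (hZb : ∀ ω, |Z ω| ≤ 2) (hZc : ∫ ω, Z ω ∂P = 0)
    (l : ℝ) : mgf Z P l ≤ Real.exp (2 * l^2) := by
  have hZint : Integrable Z P := by
    refine Integrable.mono' (integrable_const 2) hZm.aestronglyMeasurable ?_
    exact Filter.Eventually.of_forall fun ω => by simpa using hZb ω
  have h1 : mgf Z P l ≤ Real.cosh (2*l) + (∫ ω, Z ω ∂P)/2 * Real.sinh (2*l) := by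
    rw [mgf]
    have : (∫ ω, Real.exp (l * Z ω) ∂P) ≤
        ∫ ω, (Real.cosh (2*l) + (Z ω/2) * Real.sinh (2*l)) ∂P := by
      refine integral_mono ?_ ?_ (fun ω => aux_convex (hZb ω))
      · refine Integrable.mono' (integrable_const (Real.exp (2*|l|)))
          (hZm.const_mul l).exp.aestronglyMeasurable ?_
        refine Filter.Eventually.of_forall fun ω => ?_
        rw [Real.norm_eq_abs, Real.abs_exp, Real.exp_le_exp]
        calc l * Z ω ≤ |l * Z ω| := le_abs_self _
          _ = |l| * |Z ω| := abs_mul _ _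
          _ ≤ |l| * 2 := by nlinarith [abs_nonneg l, hZb ω]
          _ = 2 * |l| := by ring
      · exact (integrable_const _).add (((hZint.div_const 2).mul_const _))
    calc (∫ ω, Real.exp (l * Z ω) ∂P) ≤ _ := this
      _ = Real.cosh (2*l) + (∫ ω, Z ω ∂P)/2 * Real.sinh (2*l) := by
          rw [integral_add (integrable_const _) ((hZint.div_const 2).mul_const _),
            integral_const, integral_mul_const, integral_div]
          simp
  rw [hZc] at h1
  simp only [zero_div, zero_mul, add_zero] at h1
  calc mgf Z P l ≤ Real.cosh (2*l) := h1
    _ ≤ Real.exp ((2*l)^2/2) := Real.cosh_le_exp_half_sq _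
    _ = Real.exp (2 * l^2) := by ring_nf

lemma aux_hoeffding {Ω : Type} [MeasurableSpace Ω] (P : Measure Ω) [IsProbabilityMeasure P]
    (T : ℕ) (Z : ℕ → Ω → ℝ) (hZm : ∀ i, Measurable (Z i))
    (hindep : iIndepFun Z P)
    (hZb : ∀ i ω, |Z i ω| ≤ 2) (hZc : ∀ i, ∫ ω, Z i ω ∂P = 0)
    (a : ℝ) (ha : 0 ≤ a) :
    P {ω | (T:ℝ) * a ≤ ∑ i ∈ range T, Z i ω} ≤ ENNReal.ofReal (Real.exp (-(T:ℝ) * a^2 / 8)) := by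
  set l := a/4 with hl
  have hl0 : 0 ≤ l := by positivity
  have hint : ∀ i ∈ range T, Integrable (fun ω => Real.exp (l * Z i ω)) P := by
    intro i _
    refine Integrable.mono' (integrable_const (Real.exp (2*l)))
      ((hZm i).const_mul l).exp.aestronglyMeasurable ?_
    refine Filter.Eventually.of_forall fun ω => ?_
    rw [Real.norm_eq_abs, Real.abs_exp, Real.exp_le_exp]
    calc l * Z i ω ≤ |l| * |Z i ω| := by
          calc l * Z i ω ≤ |l * Z i ω| := le_abs_self _
            _ = |l| * |Z i ω| := abs_mul _ _
      _ ≤ l * 2 := by rw [abs_of_nonneg hl0]; nlinarith [hZb i ω]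
      _ = 2 * l := by ring
  have hS : P {ω | (T:ℝ)*a ≤ ∑ i ∈ range T, Z i ω} =
      P {ω | (T:ℝ)*a ≤ (∑ i ∈ range T, Z i) ω} := by
    congr 1; ext ω; simp [Finset.sum_apply]
  have hintS : Integrable (fun ω => Real.exp (l * (∑ i ∈ range T, Z i) ω)) P :=
    hindep.integrable_exp_mul_sum hZm hint
  have hcher := measure_ge_le_exp_mul_mgf (X := ∑ i ∈ range T, Z i) (μ := P)
    ((T:ℝ)*a) hl0 hintS
  have hmgf : mgf (∑ i ∈ range T, Z i) P l ≤ Real.exp ((T:ℝ) * (2 * l^2)) := by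
    rw [hindep.mgf_sum hZm]
    calc ∏ i ∈ range T, mgf (Z i) P l ≤ ∏ _i ∈ range T, Real.exp (2 * l^2) := by
          refine Finset.prod_le_prod (fun i _ => mgf_nonneg) (fun i _ => ?_)
          exact aux_mgf P (Z i) (hZm i) (hZb i) (hZc i) l
      _ = Real.exp ((T:ℝ) * (2*l^2)) := by
          rw [Finset.prod_const, ← Real.exp_nat_mul]; simp
  have hfin : (P {ω | (T:ℝ)*a ≤ (∑ i ∈ range T, Z i) ω}).toReal ≤ Real.exp (-(T:ℝ)*a^2/8) := by
    calc (P {ω | (T:ℝ)*a ≤ (∑ i ∈ range T, Z i) ω}).toReal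
        ≤ Real.exp (-l * ((T:ℝ)*a)) * mgf (∑ i ∈ range T, Z i) P l := hcher
      _ ≤ Real.exp (-l * ((T:ℝ)*a)) * Real.exp ((T:ℝ)*(2*l^2)) := by
          exact mul_le_mul_of_nonneg_left hmgf (Real.exp_pos _).le
      _ = Real.exp (-l*((T:ℝ)*a) + (T:ℝ)*(2*l^2)) := (Real.exp_add _ _).symm
      _ = Real.exp (-(T:ℝ)*a^2/8) := by rw [hl]; ring_nf
  rw [hS]
  rw [← ENNReal.ofReal_toReal (measure_ne_top P _)]
  exact ENNReal.ofReal_le_ofReal hfin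

/-- cube index -/
noncomputable def aux_idx (m K : ℕ) (x : Fin m → ℝ) : Fin m → Fin (K+1) :=
  fun j => ⟨min ⌊x j * (K+1)⌋₊ K, Nat.lt_succ_of_le (min_le_right _ _)⟩

/-- cube base point -/
noncomputable def aux_zpt (m K : ℕ) (c : Fin m → Fin (K+1)) : Fin m → ℝ :=
  fun j => (c j : ℝ) / (K+1)

lemma aux_idx_meas (m K : ℕ) : Measurable (aux_idx m K) := by
  refine measurable_pi_lambda _ (fun j => ?_)
  have h1 : Measurable (fun x : Fin m → ℝ => ⌊x j * (K+1)⌋₊) :=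
    Nat.measurable_floor.comp ((measurable_pi_apply j).mul_const _)
  exact (measurable_of_countable
    (fun n : ℕ => (⟨min n K, Nat.lt_succ_of_le (min_le_right _ _)⟩ : Fin (K+1)))).comp h1

lemma aux_zpt_mem (m K : ℕ) (c : Fin m → Fin (K+1)) :
    aux_zpt m K c ∈ Set.Icc (0 : Fin m → ℝ) 1 := by
  constructor <;> intro j <;> simp only [aux_zpt, Pi.zero_apply, Pi.one_apply]
  · positivity
  · rw [div_le_one (by positivity)]
    have : (c j : ℝ) ≤ K := by exact_mod_cast Nat.lt_succ_iff.1 (c j).2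
    linarith

lemma aux_idx_dist (m K : ℕ) (x : Fin m → ℝ) (hx : x ∈ Set.Icc (0:Fin m → ℝ) 1) :
    ‖x - aux_zpt m K (aux_idx m K x)‖ ≤ 1/(K+1) := by
  refine (pi_norm_le_iff_of_nonneg (by positivity)).2 (fun j => ?_)
  have hx0 : (0:ℝ) ≤ x j := hx.1 j
  have hx1 : x j ≤ 1 := hx.2 j
  have hK1 : (0:ℝ) < (K:ℝ)+1 := by positivity
  set n := ⌊x j * ((K:ℝ)+1)⌋₊ with hn
  have hub : x j * ((K:ℝ)+1) < n + 1 := Nat.lt_floor_add_one _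
  have hlb : (n:ℝ) ≤ x j * ((K:ℝ)+1) := Nat.floor_le (by positivity)
  have hc1 : ((min n K : ℕ) : ℝ) ≤ x j * ((K:ℝ)+1) := by
    rcases le_or_gt n K with h | h
    · rw [min_eq_left h]; exact hlb
    · rw [min_eq_right h.le]
      have : ((K:ℝ)+1) ≤ (n:ℝ) := by exact_mod_cast h
      linarith
  have hc2 : x j * ((K:ℝ)+1) ≤ ((min n K : ℕ) : ℝ) + 1 := by
    rcases le_or_gt n K with h | h
    · rw [min_eq_left h]; exact hub.le
    · rw [min_eq_right h.le]
      nlinarith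
  have e1 : ((min n K : ℕ) : ℝ) / ((K:ℝ)+1) ≤ x j := by
    rw [div_le_iff₀ hK1]; linarith
  have e2 : x j ≤ (((min n K : ℕ) : ℝ) + 1) / ((K:ℝ)+1) := by
    rw [le_div_iff₀ hK1]; linarith
  have hsplit : (((min n K : ℕ) : ℝ) + 1) / ((K:ℝ)+1)
      = ((min n K : ℕ) : ℝ)/((K:ℝ)+1) + 1/((K:ℝ)+1) := by ring
  have hgoal : |x j - ((min n K : ℕ) : ℝ)/((K:ℝ)+1)| ≤ 1/((K:ℝ)+1) := by
    rw [abs_le]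
    constructor
    · have h1 : (0:ℝ) ≤ 1/((K:ℝ)+1) := by positivity
      linarith
    · rw [hsplit] at e2; linarith
  simp only [Pi.sub_apply, aux_zpt, aux_idx, Real.norm_eq_abs]
  push_cast at hgoal ⊢
  exact hgoal

/-- coordinatewise clamp to [0,1] -/
noncomputable def aux_clamp (m : ℕ) (x : Fin m → ℝ) : Fin m → ℝ :=
  fun j => max 0 (min (x j) 1)

lemma aux_clamp_mem (m : ℕ) (x : Fin m → ℝ) : aux_clamp m x ∈ Set.Icc (0:Fin m → ℝ) 1 := by
  constructor <;> intro j <;> simp only [aux_clamp, Pi.zero_apply, Pi.one_apply]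
  · exact le_max_left _ _
  · exact max_le (by norm_num) (min_le_right _ _)

lemma aux_clamp_eq (m : ℕ) (x : Fin m → ℝ) (hx : x ∈ Set.Icc (0:Fin m → ℝ) 1) :
    aux_clamp m x = x := by
  funext j
  have h0 : (0:ℝ) ≤ x j := hx.1 j
  have h1 : x j ≤ 1 := hx.2 j
  simp [aux_clamp, min_eq_left h1, max_eq_right h0]

lemma aux_clamp_lip (m : ℕ) (x y : Fin m → ℝ) :
    ‖aux_clamp m x - aux_clamp m y‖ ≤ ‖x - y‖ := by
  refine (pi_norm_le_iff_of_nonneg (norm_nonneg _)).2 (fun j => ?_)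
  have hj : |x j - y j| ≤ ‖x - y‖ := by
    calc |x j - y j| = ‖(x - y) j‖ := by simp [Real.norm_eq_abs]
      _ ≤ ‖x - y‖ := norm_le_pi_norm _ j
  simp only [Pi.sub_apply, aux_clamp, Real.norm_eq_abs]
  have h1 : |min (x j) 1 - min (y j) 1| ≤ |x j - y j| := by
    rcases le_total (x j) 1 with h | h <;> rcases le_total (y j) 1 with h' | h' <;>
      simp [min_eq_left, min_eq_right, h, h'] <;> rw [abs_le] <;>
      constructor <;> cases abs_le.1 (le_refl |x j - y j|) <;>
      [skip; skip; skip; skip] <;> nlinarith [abs_nonneg (x j - y j), le_abs_self (x j - y j),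
        neg_abs_le (x j - y j)]
  have h2 : |max 0 (min (x j) 1) - max 0 (min (y j) 1)| ≤ |min (x j) 1 - min (y j) 1| := by
    rcases le_total 0 (min (x j) 1) with h | h <;> rcases le_total 0 (min (y j) 1) with h' | h' <;>
      simp [max_eq_right, max_eq_left, h, h'] <;> rw [abs_le] <;> constructor <;>
      nlinarith [le_abs_self (min (x j) 1 - min (y j) 1), neg_abs_le (min (x j) 1 - min (y j) 1)]
  exact le_trans (le_trans h2 h1) hj
noncomputable def aux_nu (m K T : ℕ) {Ω : Type} (X : ℕ → Ω → (Fin m → ℝ)) (ω : Ω)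
    (c : Fin m → Fin (K+1)) : ℝ :=
  (T:ℝ)⁻¹ * ∑ i ∈ range T, (if aux_idx m K (X i ω) = c then (1:ℝ) else 0)

noncomputable def aux_pp (m K : ℕ) {Ω : Type} [MeasurableSpace Ω] (P : Measure Ω)
    (X0 : Ω → (Fin m → ℝ)) (c : Fin m → Fin (K+1)) : ℝ :=
  (P (X0 ⁻¹' (aux_idx m K ⁻¹' {c}))).toReal

/-- swap lemma : empirical average of g∘idx as weighted sum of empirical frequencies -/
lemma aux_swap {α : Type*} [Fintype α] [DecidableEq α] (T : ℕ) (g : α → ℝ) (v : ℕ → α) :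
    ∑ c : α, g c * ((T:ℝ)⁻¹ * ∑ i ∈ range T, (if v i = c then (1:ℝ) else 0))
      = (T:ℝ)⁻¹ * ∑ i ∈ range T, g (v i) := by
  simp_rw [Finset.mul_sum, mul_ite, mul_one, mul_zero]
  rw [Finset.sum_comm]
  refine Finset.sum_congr rfl (fun i _ => ?_)
  rw [Finset.sum_ite_eq univ (v i) (fun c => g c * (T:ℝ)⁻¹)]
  simp [mul_comm]

/-- integral of g∘idx∘W as weighted sum of cell probabilities -/
lemma aux_int {Ω : Type} [MeasurableSpace Ω] (P : Measure Ω) [IsProbabilityMeasure P]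
    (m K : ℕ) (W : Ω → (Fin m → ℝ)) (hW : Measurable W)
    (g : (Fin m → Fin (K+1)) → ℝ) :
    ∫ ω, g (aux_idx m K (W ω)) ∂P
      = ∑ c : Fin m → Fin (K+1), g c * (P (W ⁻¹' (aux_idx m K ⁻¹' {c}))).toReal := by
  have hps : ∀ c : Fin m → Fin (K+1), MeasurableSet (W ⁻¹' (aux_idx m K ⁻¹' {c})) :=
    fun c => hW ((aux_idx_meas m K) (measurableSet_singleton c))
  classical
  have hfun : ∀ ω, g (aux_idx m K (W ω)) = ∑ c : Fin m → Fin (K+1),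
      Set.indicator (W ⁻¹' (aux_idx m K ⁻¹' {c})) (fun _ => g c) ω := by
    intro ω
    have : ∀ c : Fin m → Fin (K+1),
        Set.indicator (W ⁻¹' (aux_idx m K ⁻¹' {c})) (fun _ => g c) ω
          = if aux_idx m K (W ω) = c then g c else 0 := by
      intro c
      rw [Set.indicator_apply]
      simp [Set.mem_preimage]
    rw [Finset.sum_congr rfl (fun c _ => this c)]
    rw [Finset.sum_ite_eq univ (aux_idx m K (W ω)) g]
    simp
  simp_rw [hfun]
  rw [integral_finset_sum _ (fun c _ => (integrable_const (g c)).indicator (hps c))]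
  refine Finset.sum_congr rfl (fun c _ => ?_)
  rw [integral_indicator_const _ (hps c)]
  simp [mul_comm, Measure.real]

lemma norm_le_one_of_Icc {m : ℕ} {x y : Fin m → ℝ} (hx : x ∈ Set.Icc (0:Fin m → ℝ) 1)
    (hy : y ∈ Set.Icc (0:Fin m → ℝ) 1) : ‖x - y‖ ≤ 1 := by
  refine (pi_norm_le_iff_of_nonneg zero_le_one).2 (fun j => ?_)
  have := hx.1 j; have := hx.2 j; have := hy.1 j; have := hy.2 j
  simp only [Pi.sub_apply, Real.norm_eq_abs, Pi.zero_apply, Pi.one_apply] at *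
  rw [abs_le]; constructor <;> linarith

lemma aux_dev {Ω : Type} [MeasurableSpace Ω] (P : Measure Ω) [IsProbabilityMeasure P]
    (m K T : ℕ) (hT : 0 < T) (X : ℕ → Ω → (Fin m → ℝ)) (hXm : ∀ i, Measurable (X i))
    (hXicc : ∀ i ω, X i ω ∈ Set.Icc (0:Fin m → ℝ) 1)
    (L : ℝ) (hL : 0 < L) (F : (Fin m → ℝ) → ℝ) (hF : ∀ x y, |F x - F y| ≤ L * ‖x - y‖)
    (ω : Ω) :
    |(1/(T:ℝ)) * ∑ i ∈ range T, F (X i ω) - ∫ ω', F (X 0 ω') ∂P|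
      ≤ 2*L/(K+1) + L * ∑ c : Fin m → Fin (K+1),
          |aux_nu m K T X ω c - aux_pp m K P (X 0) c| := by
  have hT0 : (0:ℝ) < (T:ℝ) := by exact_mod_cast hT
  have hFm : Measurable F := by
    have hlip : LipschitzWith (Real.toNNReal L) F := by
      refine LipschitzWith.of_dist_le_mul (fun x y => ?_)
      rw [Real.dist_eq, dist_eq_norm]
      calc |F x - F y| ≤ L * ‖x - y‖ := hF x y
        _ ≤ (Real.toNNReal L : ℝ) * ‖x - y‖ := by
            rw [Real.coe_toNNReal L hL.le]
    exact hlip.continuous.measurable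
  set q := aux_idx m K with hq
  set z := aux_zpt m K with hz
  set φ : (Fin m → ℝ) → ℝ := fun x => F (z (q x)) with hφ
  set g : (Fin m → Fin (K+1)) → ℝ := fun c => F (z c) with hg
  -- bounds
  have hFbd : ∀ x ∈ Set.Icc (0:Fin m → ℝ) 1, |F x| ≤ |F 0| + L := by
    intro x hx
    have h1 : |F x - F 0| ≤ L * ‖x - 0‖ := hF x 0
    have h2 : ‖x - (0 : Fin m → ℝ)‖ ≤ 1 :=
      norm_le_one_of_Icc hx ⟨le_refl _, fun j => zero_le_one⟩
    have h3 : |F x| - |F 0| ≤ |F x - F 0| := abs_sub_abs_le_abs_sub _ _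
    nlinarith
  have hφbd : ∀ x, |φ x| ≤ |F 0| + L := fun x => hFbd _ (aux_zpt_mem m K (q x))
  have happrox : ∀ x ∈ Set.Icc (0:Fin m → ℝ) 1, |F x - φ x| ≤ L/(K+1) := by
    intro x hx
    calc |F x - φ x| ≤ L * ‖x - z (q x)‖ := hF _ _
      _ ≤ L * (1/(K+1)) := by
          refine mul_le_mul_of_nonneg_left ?_ hL.le
          exact aux_idx_dist m K x hx
      _ = L/(K+1) := by ring
  have hgbd : ∀ c, |g c - g (fun _ => 0)| ≤ L := by
    intro c
    calc |g c - g (fun _ => 0)| ≤ L * ‖z c - z (fun _ => 0)‖ := hF _ _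
      _ ≤ L * 1 := mul_le_mul_of_nonneg_left
          (norm_le_one_of_Icc (aux_zpt_mem m K c) (aux_zpt_mem m K _)) hL.le
      _ = L := mul_one L
  -- integrability
  have hintF : Integrable (fun ω' => F (X 0 ω')) P := by
    refine Integrable.mono' (integrable_const (|F 0| + L))
      (hFm.comp (hXm 0)).aestronglyMeasurable
      (Filter.Eventually.of_forall (fun ω' => ?_))
    rw [Real.norm_eq_abs]; exact hFbd _ (hXicc 0 ω')
  have hφm : Measurable φ := (measurable_of_countable g).comp ((aux_idx_meas m K))
  have hintφ : Integrable (fun ω' => φ (X 0 ω')) P := by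
    refine Integrable.mono' (integrable_const (|F 0| + L))
      (hφm.comp (hXm 0)).aestronglyMeasurable
      (Filter.Eventually.of_forall (fun ω' => ?_))
    rw [Real.norm_eq_abs]; exact hφbd _
  -- the four quantities
  set A : ℝ := (1/(T:ℝ)) * ∑ i ∈ range T, F (X i ω) with hA
  set A' : ℝ := (1/(T:ℝ)) * ∑ i ∈ range T, φ (X i ω) with hA'
  set B : ℝ := ∫ ω', F (X 0 ω') ∂P with hB
  set B' : ℝ := ∫ ω', φ (X 0 ω') ∂P with hB'
  have step1 : |A - A'| ≤ L/(K+1) := by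
    rw [hA, hA', ← mul_sub, ← Finset.sum_sub_distrib, abs_mul,
      abs_of_nonneg (by positivity : (0:ℝ) ≤ 1/(T:ℝ))]
    calc (1/(T:ℝ)) * |∑ i ∈ range T, (F (X i ω) - φ (X i ω))|
        ≤ (1/(T:ℝ)) * ∑ i ∈ range T, |F (X i ω) - φ (X i ω)| := by
          refine mul_le_mul_of_nonneg_left (Finset.abs_sum_le_sum_abs _ _) (by positivity)
      _ ≤ (1/(T:ℝ)) * ∑ _i ∈ range T, (L/(K+1)) := by
          refine mul_le_mul_of_nonneg_left
            (Finset.sum_le_sum (fun i _ => happrox _ (hXicc i ω))) (by positivity)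
      _ = L/(K+1) := by
          rw [Finset.sum_const, card_range, nsmul_eq_mul]
          field_simp
  have step2 : |B - B'| ≤ L/(K+1) := by
    rw [hB, hB', ← integral_sub hintF hintφ]
    have := norm_integral_le_of_norm_le_const (μ := P)
      (f := fun ω' => F (X 0 ω') - φ (X 0 ω')) (C := L/(K+1))
      (Filter.Eventually.of_forall (fun ω' => by
        rw [Real.norm_eq_abs]; exact happrox _ (hXicc 0 ω')))
    simpa using this
  have step3 : |A' - B'| ≤ L * ∑ c : Fin m → Fin (K+1),
      |aux_nu m K T X ω c - aux_pp m K P (X 0) c| := by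
    set g' : (Fin m → Fin (K+1)) → ℝ := fun c => g c - g (fun _ => 0) with hg'
    have e1 : ∀ x, φ x = g' (q x) + g (fun _ => 0) := by
      intro x; simp [hg', hφ, hg]
    have hA'e : A' = (∑ c : Fin m → Fin (K+1), g' c * aux_nu m K T X ω c)
        + g (fun _ => 0) := by
      rw [hA']
      calc (1/(T:ℝ)) * ∑ i ∈ range T, φ (X i ω)
          = (1/(T:ℝ)) * ∑ i ∈ range T, (g' (q (X i ω)) + g (fun _ => 0)) := by
            rw [Finset.sum_congr rfl (fun i _ => e1 (X i ω))]
        _ = (1/(T:ℝ)) * (∑ i ∈ range T, g' (q (X i ω)))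
            + (1/(T:ℝ)) * ((T:ℝ) * g (fun _ => 0)) := by
            rw [Finset.sum_add_distrib, mul_add, Finset.sum_const, card_range, nsmul_eq_mul]
        _ = (∑ c : Fin m → Fin (K+1), g' c * aux_nu m K T X ω c) + g (fun _ => 0) := by
            rw [one_div]
            have swap := aux_swap (α := Fin m → Fin (K+1)) T g' (fun i => q (X i ω))
            simp only [aux_nu, ← hq]
            rw [swap]
            congr 1
            field_simp
    have hintg' : Integrable (fun ω' => g' (q (X 0 ω'))) P := by
      have : (fun ω' => g' (q (X 0 ω'))) = fun ω' => φ (X 0 ω') - g (fun _ => 0) := by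
        funext ω'; rw [e1 (X 0 ω')]; ring
      rw [this]
      exact hintφ.sub (integrable_const _)
    have hB'e : B' = (∑ c : Fin m → Fin (K+1), g' c * aux_pp m K P (X 0) c)
        + g (fun _ => 0) := by
      rw [hB']
      calc ∫ ω', φ (X 0 ω') ∂P
          = ∫ ω', (g' (q (X 0 ω')) + g (fun _ => 0)) ∂P := by
            refine integral_congr_ae (Filter.Eventually.of_forall (fun ω' => e1 (X 0 ω')))
        _ = (∫ ω', g' (q (X 0 ω')) ∂P) + g (fun _ => 0) := by
            rw [integral_add hintg' (integrable_const _), integral_const]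
            simp
        _ = (∑ c : Fin m → Fin (K+1), g' c * aux_pp m K P (X 0) c) + g (fun _ => 0) := by
            have hint := aux_int P m K (X 0) (hXm 0) g'
            rw [← hq] at hint
            rw [hint]
            rfl
    rw [hA'e, hB'e]
    have : (∑ c : Fin m → Fin (K+1), g' c * aux_nu m K T X ω c) + g (fun _ => 0)
        - ((∑ c : Fin m → Fin (K+1), g' c * aux_pp m K P (X 0) c) + g (fun _ => 0))
        = ∑ c : Fin m → Fin (K+1),
            g' c * (aux_nu m K T X ω c - aux_pp m K P (X 0) c) := by
      have h0 : ∀ S1 S2 G : ℝ, (S1 + G) - (S2 + G) = S1 - S2 := by intros; ring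
      rw [h0, ← Finset.sum_sub_distrib]
      exact Finset.sum_congr rfl (fun c _ => (mul_sub _ _ _).symm)
    rw [this]
    calc |∑ c : Fin m → Fin (K+1), g' c * (aux_nu m K T X ω c - aux_pp m K P (X 0) c)|
        ≤ ∑ c : Fin m → Fin (K+1), |g' c * (aux_nu m K T X ω c - aux_pp m K P (X 0) c)| :=
          Finset.abs_sum_le_sum_abs _ _
      _ ≤ ∑ c : Fin m → Fin (K+1), L * |aux_nu m K T X ω c - aux_pp m K P (X 0) c| := by
          refine Finset.sum_le_sum (fun c _ => ?_)
          rw [abs_mul]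
          exact mul_le_mul_of_nonneg_right (hgbd c) (abs_nonneg _)
      _ = L * ∑ c : Fin m → Fin (K+1), |aux_nu m K T X ω c - aux_pp m K P (X 0) c| := by
          rw [Finset.mul_sum]
  calc |A - B| ≤ |A - A'| + |A' - B| := abs_sub_le A A' B
    _ ≤ |A - A'| + (|A' - B'| + |B' - B|) := by
        have := abs_sub_le A' B' B
        linarith
    _ ≤ L/(K+1) + (L * (∑ c : Fin m → Fin (K+1),
          |aux_nu m K T X ω c - aux_pp m K P (X 0) c|) + L/(K+1)) := by
        have h2 : |B' - B| ≤ L/((K:ℝ)+1) := by rw [abs_sub_comm]; exact step2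
        exact add_le_add step1 (add_le_add step3 h2)
    _ = 2*L/(K+1) + L * ∑ c : Fin m → Fin (K+1),
          |aux_nu m K T X ω c - aux_pp m K P (X 0) c| := by ring

lemma aux_union {Ω : Type} [MeasurableSpace Ω] (P : Measure Ω) [IsProbabilityMeasure P]
    (m K T : ℕ) (hT : 0 < T) (X : ℕ → Ω → (Fin m → ℝ)) (hXm : ∀ i, Measurable (X i))
    (hindep : iIndepFun X P)
    (hident : ∀ i, Measure.map (X i) P = Measure.map (X 0) P)
    (a : ℝ) (ha : 0 ≤ a) :
    P {ω | a ≤ ∑ c : Fin m → Fin (K+1), |aux_nu m K T X ω c - aux_pp m K P (X 0) c|}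
      ≤ ENNReal.ofReal ((2:ℝ)^((K+1)^m) * Real.exp (-(T:ℝ)*a^2/8)) := by
  classical
  have hT0 : (0:ℝ) < (T:ℝ) := by exact_mod_cast hT
  set σ : Bool → ℝ := fun b => if b then 1 else -1 with hσ
  have hσb : ∀ b, |σ b| ≤ 1 := by intro b; cases b <;> simp [hσ]
  set q := aux_idx m K with hq
  -- per sign pattern data
  set hh : ((Fin m → Fin (K+1)) → Bool) → (Fin m → ℝ) → ℝ :=
    fun s x => σ (s (q x)) with hhh
  have hhm : ∀ s, Measurable (hh s) := fun s => by
    rw [hq] at *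
    exact (measurable_of_countable (fun c => σ (s c))).comp (aux_idx_meas m K)
  set μ0 : ((Fin m → Fin (K+1)) → Bool) → ℝ := fun s => ∫ ω', hh s (X 0 ω') ∂P with hμ0
  set Z : ((Fin m → Fin (K+1)) → Bool) → ℕ → Ω → ℝ :=
    fun s i ω => hh s (X i ω) - μ0 s with hZ
  have hμ0b : ∀ s, |μ0 s| ≤ 1 := by
    intro s
    rw [hμ0]
    have := norm_integral_le_of_norm_le_const (μ := P) (f := fun ω' => hh s (X 0 ω'))
      (C := 1) (Filter.Eventually.of_forall (fun ω' => by
        rw [Real.norm_eq_abs]; exact hσb _))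
    simpa using this
  have hint : ∀ s i, Integrable (fun ω => hh s (X i ω)) P := by
    intro s i
    refine Integrable.mono' (integrable_const 1)
      ((hhm s).comp (hXm i)).aestronglyMeasurable
      (Filter.Eventually.of_forall (fun ω => by rw [Real.norm_eq_abs]; exact hσb _))
  have hsame : ∀ s i, ∫ ω, hh s (X i ω) ∂P = μ0 s := by
    intro s i
    rw [hμ0]
    rw [← integral_map (hXm i).aemeasurable (hhm s).aestronglyMeasurable, hident i,
      integral_map (hXm 0).aemeasurable (hhm s).aestronglyMeasurable]
  -- the key algebraic identity
  have hkey : ∀ s ω, ∑ i ∈ range T, Z s i ω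
      = (T:ℝ) * ∑ c : Fin m → Fin (K+1),
          σ (s c) * (aux_nu m K T X ω c - aux_pp m K P (X 0) c) := by
    intro s ω
    have swap := aux_swap (α := Fin m → Fin (K+1)) T (fun c => σ (s c))
      (fun i => q (X i ω))
    have h1 : ∑ i ∈ range T, hh s (X i ω)
        = (T:ℝ) * ∑ c : Fin m → Fin (K+1), σ (s c) * aux_nu m K T X ω c := by
      simp only [aux_nu, ← hq]
      rw [swap, hhh]
      field_simp
    have h2 : μ0 s = ∑ c : Fin m → Fin (K+1), σ (s c) * aux_pp m K P (X 0) c := by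
      have hint0 := aux_int P m K (X 0) (hXm 0) (fun c => σ (s c))
      rw [← hq] at hint0
      rw [hμ0, hhh]
      exact hint0
    calc ∑ i ∈ range T, Z s i ω
        = (∑ i ∈ range T, hh s (X i ω)) - (T:ℝ) * μ0 s := by
          rw [hZ]
          rw [Finset.sum_sub_distrib, Finset.sum_const, card_range, nsmul_eq_mul]
      _ = (T:ℝ) * ∑ c : Fin m → Fin (K+1),
            σ (s c) * (aux_nu m K T X ω c - aux_pp m K P (X 0) c) := by
          rw [h1, h2, ← mul_sub, ← Finset.sum_sub_distrib]
          simp_rw [← mul_sub]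
  -- inclusion in union of events
  have hincl : {ω | a ≤ ∑ c : Fin m → Fin (K+1),
        |aux_nu m K T X ω c - aux_pp m K P (X 0) c|}
      ⊆ ⋃ s : (Fin m → Fin (K+1)) → Bool,
          {ω | (T:ℝ) * a ≤ ∑ i ∈ range T, Z s i ω} := by
    intro ω hω
    simp only [Set.mem_setOf_eq] at hω
    set s0 : (Fin m → Fin (K+1)) → Bool :=
      fun c => decide (aux_pp m K P (X 0) c ≤ aux_nu m K T X ω c) with hs0
    refine Set.mem_iUnion.2 ⟨s0, ?_⟩
    simp only [Set.mem_setOf_eq]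
    rw [hkey s0 ω]
    have heq : ∑ c : Fin m → Fin (K+1),
        σ (s0 c) * (aux_nu m K T X ω c - aux_pp m K P (X 0) c)
        = ∑ c : Fin m → Fin (K+1), |aux_nu m K T X ω c - aux_pp m K P (X 0) c| := by
      refine Finset.sum_congr rfl (fun c _ => ?_)
      rcases le_or_gt (aux_pp m K P (X 0) c) (aux_nu m K T X ω c) with h | h
      · rw [hs0]
        simp only []
        rw [decide_eq_true h]
        simp only [hσ, if_true]
        rw [abs_of_nonneg (by linarith)]
        ring
      · rw [hs0]
        simp only []
        rw [decide_eq_false (not_le.2 h)]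
        simp only [hσ, if_false]
        rw [abs_of_neg (by linarith)]
        norm_num
    rw [heq]
    exact mul_le_mul_of_nonneg_left hω hT0.le
  -- union bound
  calc P {ω | a ≤ ∑ c : Fin m → Fin (K+1),
        |aux_nu m K T X ω c - aux_pp m K P (X 0) c|}
      ≤ P (⋃ s : (Fin m → Fin (K+1)) → Bool,
          {ω | (T:ℝ) * a ≤ ∑ i ∈ range T, Z s i ω}) := measure_mono hincl
    _ ≤ ∑' s : (Fin m → Fin (K+1)) → Bool,
          P {ω | (T:ℝ) * a ≤ ∑ i ∈ range T, Z s i ω} := measure_iUnion_le _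
    _ = ∑ s : (Fin m → Fin (K+1)) → Bool,
          P {ω | (T:ℝ) * a ≤ ∑ i ∈ range T, Z s i ω} := tsum_fintype _
    _ ≤ ∑ _s : (Fin m → Fin (K+1)) → Bool, ENNReal.ofReal (Real.exp (-(T:ℝ)*a^2/8)) := by
        refine Finset.sum_le_sum (fun s _ => ?_)
        refine aux_hoeffding P T (Z s) (fun i => ?_) ?_ (fun i ω => ?_) (fun i => ?_) a ha
        · exact ((hhm s).comp (hXm i)).sub measurable_const
        · have := hindep.comp (fun _ => fun x => hh s x - μ0 s)
            (fun _ => (hhm s).sub measurable_const)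
          exact this
        · rw [hZ]
          simp only []
          rw [sub_eq_add_neg]
          calc |hh s (X i ω) + -μ0 s| ≤ |hh s (X i ω)| + |(-μ0 s)| := abs_add_le _ _
            _ ≤ 1 + 1 := by rw [abs_neg]; exact add_le_add (hσb _) (hμ0b s)
            _ = 2 := by norm_num
        · rw [hZ]
          simp only []
          rw [integral_sub (hint s i) (integrable_const _), integral_const]
          simp [hsame s i]
    _ = ENNReal.ofReal ((2:ℝ)^((K+1)^m) * Real.exp (-(T:ℝ)*a^2/8)) := by
        rw [Finset.sum_const, Finset.card_univ, Fintype.card_fun]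
        simp only [Fintype.card_bool, Fintype.card_pi, Fintype.card_fin, Finset.prod_const,
          Finset.card_univ]
        rw [nsmul_eq_mul]
        rw [← ENNReal.ofReal_natCast (2^((K+1)^m)), ← ENNReal.ofReal_mul (by positivity)]
        congr 1
        push_cast
        ring

lemma aux_F_meas {m : ℕ} {L : ℝ} (hL : 0 < L) {F : (Fin m → ℝ) → ℝ}
    (hF : ∀ x y, |F x - F y| ≤ L * ‖x - y‖) : Measurable F := by
  have hlip : LipschitzWith (Real.toNNReal L) F := by
    refine LipschitzWith.of_dist_le_mul (fun x y => ?_)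
    rw [Real.dist_eq, dist_eq_norm]
    calc |F x - F y| ≤ L * ‖x - y‖ := hF x y
      _ ≤ (Real.toNNReal L : ℝ) * ‖x - y‖ := by rw [Real.coe_toNNReal L hL.le]
  exact hlip.continuous.measurable

lemma aux_F_int {Ω : Type} [MeasurableSpace Ω] (P : Measure Ω) [IsProbabilityMeasure P]
    {m : ℕ} {L : ℝ} (hL : 0 < L) {F : (Fin m → ℝ) → ℝ}
    (hF : ∀ x y, |F x - F y| ≤ L * ‖x - y‖)
    (W : Ω → (Fin m → ℝ)) (hW : Measurable W) (hWicc : ∀ ω, W ω ∈ Set.Icc (0:Fin m → ℝ) 1) :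
    Integrable (fun ω => F (W ω)) P := by
  refine Integrable.mono' (integrable_const (|F 0| + L))
    ((aux_F_meas hL hF).comp hW).aestronglyMeasurable
    (Filter.Eventually.of_forall (fun ω => ?_))
  rw [Real.norm_eq_abs]
  have h1 : |F (W ω) - F 0| ≤ L * ‖W ω - 0‖ := hF _ _
  have h2 : ‖W ω - (0 : Fin m → ℝ)‖ ≤ 1 :=
    norm_le_one_of_Icc (hWicc ω) ⟨le_refl _, fun j => zero_le_one⟩
  have h3 : |F (W ω)| - |F 0| ≤ |F (W ω) - F 0| := abs_sub_abs_le_abs_sub _ _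
  nlinarith

lemma aux_triv {Ω : Type} [MeasurableSpace Ω] (P : Measure Ω) [IsProbabilityMeasure P]
    (m T : ℕ) (hT : 0 < T) (X : ℕ → Ω → (Fin m → ℝ)) (hXm : ∀ i, Measurable (X i))
    (hXicc : ∀ i ω, X i ω ∈ Set.Icc (0:Fin m → ℝ) 1)
    (L : ℝ) (hL : 0 < L) (F : (Fin m → ℝ) → ℝ) (hF : ∀ x y, |F x - F y| ≤ L * ‖x - y‖)
    (ω : Ω) :
    |(1/(T:ℝ)) * ∑ i ∈ range T, F (X i ω) - ∫ ω', F (X 0 ω') ∂P| ≤ L := by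
  have hT0 : (0:ℝ) < (T:ℝ) := by exact_mod_cast hT
  have hintF : Integrable (fun ω' => F (X 0 ω')) P :=
    aux_F_int P hL hF (X 0) (hXm 0) (fun ω' => hXicc 0 ω')
  set B : ℝ := ∫ ω', F (X 0 ω') ∂P with hB
  have hI : ∀ i, |F (X i ω) - B| ≤ L := by
    intro i
    have e : F (X i ω) - B = ∫ ω', (F (X i ω) - F (X 0 ω')) ∂P := by
      rw [integral_sub (integrable_const _) hintF, integral_const]
      simp [hB]
    rw [e]
    have := norm_integral_le_of_norm_le_const (μ := P)
      (f := fun ω' => F (X i ω) - F (X 0 ω')) (C := L)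
      (Filter.Eventually.of_forall (fun ω' => by
        rw [Real.norm_eq_abs]
        calc |F (X i ω) - F (X 0 ω')| ≤ L * ‖X i ω - X 0 ω'‖ := hF _ _
          _ ≤ L * 1 := mul_le_mul_of_nonneg_left
              (norm_le_one_of_Icc (hXicc i ω) (hXicc 0 ω')) hL.le
          _ = L := mul_one L))
    simpa using this
  have e2 : (1/(T:ℝ)) * ∑ i ∈ range T, F (X i ω) - B
      = (1/(T:ℝ)) * ∑ i ∈ range T, (F (X i ω) - B) := by
    rw [Finset.sum_sub_distrib, Finset.sum_const, card_range, nsmul_eq_mul, mul_sub]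
    field_simp
  rw [e2, abs_mul, abs_of_nonneg (by positivity : (0:ℝ) ≤ 1/(T:ℝ))]
  calc (1/(T:ℝ)) * |∑ i ∈ range T, (F (X i ω) - B)|
      ≤ (1/(T:ℝ)) * ∑ i ∈ range T, |F (X i ω) - B| :=
        mul_le_mul_of_nonneg_left (Finset.abs_sum_le_sum_abs _ _) (by positivity)
    _ ≤ (1/(T:ℝ)) * ∑ _i ∈ range T, L :=
        mul_le_mul_of_nonneg_left (Finset.sum_le_sum (fun i _ => hI i)) (by positivity)
    _ = L := by
        rw [Finset.sum_const, card_range, nsmul_eq_mul]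
        field_simp

lemma aux_div (Bq Q S : ℝ) (hB : 0 ≤ Bq) (hQ : 0 < Q) (hS : 1 ≤ S) (h128 : 128 * S ≤ Q) :
    Bq * S / Q ≤ Bq/128 ∧ Bq/Q ≤ Bq/128 ∧ 2*(Bq/Q) ≤ Bq/64 := by
  have hQ128 : (128:ℝ) ≤ Q := by nlinarith
  refine ⟨?_, ?_, ?_⟩
  · rw [div_le_div_iff₀ hQ (by norm_num)]
    nlinarith
  · rw [div_le_div_iff₀ hQ (by norm_num)]
    nlinarith
  · have h : 2*(Bq/Q) = (2*Bq)/Q := by ring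
    rw [h, div_le_div_iff₀ hQ (by norm_num)]
    nlinarith

set_option maxHeartbeats 1000000 in
lemma aux_calc (m K T : ℕ) (L ε : ℝ) (hm : 0 < m) (hL : 0 < L) (hε : 0 < ε) (hεL : ε < L)
    (hT2 : (2:ℝ) ≤ (T:ℝ))
    (hK2 : ((K:ℝ)+1) ≤ 6*L/ε)
    (hD : 1 < ((T:ℝ)/Real.log T) * (ε/((128*6^m : ℝ) * L)) ^ ((m:ℝ)+2)) :
    (2:ℝ)^((K+1)^m) * Real.exp (-(T:ℝ)*(ε/(2*L))^2/8)
      ≤ 2 * (((T:ℝ)/Real.log T) * (ε/((128*6^m : ℝ)*L)) ^ ((m:ℝ)+2)) ^ (-(m:ℝ)/((m:ℝ)+2))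
        * Real.exp (-(Real.log T)
            * (1 * (((T:ℝ)/Real.log T) * (ε/((128*6^m : ℝ)*L)) ^ ((m:ℝ)+2)) - 1)) := by
  have hlog2 : (0.6931471803 : ℝ) < Real.log 2 := Real.log_two_gt_d9
  set t := Real.log T with htdef
  have ht2 : Real.log 2 ≤ t := Real.log_le_log (by norm_num) hT2
  have ht : (1/2 : ℝ) < t := by linarith
  have hT0 : (0:ℝ) < T := by linarith
  set r := ε/L with hrdef
  have hr0 : 0 < r := by positivity
  have hr1 : r < 1 := (div_lt_one hL).2 hεL
  set S : ℝ := 6^m with hSdef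
  have hS1 : (1:ℝ) ≤ S := by
    rw [hSdef]
    have := pow_le_pow_left₀ (by norm_num : (0:ℝ) ≤ 1) (by norm_num : (1:ℝ) ≤ 6) m
    simpa using this
  set C : ℝ := 128*S with hCdef
  have hC128 : (128:ℝ) ≤ C := by nlinarith
  have hC1 : (1:ℝ) ≤ C := by linarith
  have hC0 : (0:ℝ) < C := by linarith
  set Q : ℝ := C^(m+2) with hQdef
  have hQC : C ≤ Q := le_self_pow₀ hC1 (by omega)
  have hQ0 : (0:ℝ) < Q := by positivity
  have hQ128 : 128 * S ≤ Q := by rw [← hCdef]; exact hQC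
  -- rewrite the rpow into nat pow
  have hrw : ε/(C*L) = r/C := by rw [hrdef, mul_comm C L, ← div_div]
  have hDrw : (ε/(C*L)) ^ ((m:ℝ)+2) = (r/C)^(m+2) := by
    rw [hrw, show ((m:ℝ)+2) = ((m+2:ℕ):ℝ) by push_cast; ring, Real.rpow_natCast]
  set D : ℝ := ((T:ℝ)/t) * (r/C)^(m+2) with hDdef
  have hD1 : 1 < D := by rw [hDdef, ← hDrw]; exact hD
  have hD0 : 0 < D := by linarith
  have hDeq : D = ((T:ℝ) * r^(m+2))/(t * Q) := by
    rw [hDdef, div_pow, hQdef]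
    field_simp
  have key0 : t * Q < (T:ℝ) * r^(m+2) := by
    have := (one_lt_div (by positivity : (0:ℝ) < t * Q)).1 (hDeq ▸ hD1)
    linarith
  have hrsplit : r^(m+2) = r^m * r^2 := by ring
  have hrm : r^(m+2) ≤ r^2 := pow_le_pow_of_le_one hr0.le hr1.le (by omega)
  have hrm0 : (0:ℝ) < r^m := by positivity
  have htD : t * D = (T:ℝ) * r^(m+2)/Q := by
    rw [hDeq]
    field_simp
  set B : ℝ := (T:ℝ) * r^2 with hBdef
  have hB0 : 0 < B := by positivity
  have hKr : ((K:ℝ)+1) ≤ 6/r := by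
    rw [hrdef, div_div_eq_mul_div]
    exact hK2
  have hKrS : (((K+1)^m : ℕ) : ℝ) * r^m ≤ S := by
    have hN : (((K+1)^m : ℕ) : ℝ) ≤ (6/r)^m := by
      push_cast
      exact pow_le_pow_left₀ (by positivity) hKr m
    have h6 : (6/r)^m * r^m = S := by
      rw [div_pow, hSdef]
      field_simp
    nlinarith
  -- transform the goal into an exponent inequality
  set N : ℕ := (K+1)^m with hNdef
  have ha : -(T:ℝ)*(ε/(2*L))^2/8 = -(B/32) := by
    rw [hBdef, hrdef]
    field_simp
    ring
  rw [hDrw, ← hDdef, ha]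
  have h2N : (2:ℝ)^N = Real.exp ((N:ℝ) * Real.log 2) := by
    rw [← Real.exp_log (by norm_num : (0:ℝ) < 2), ← Real.exp_nat_mul, Real.exp_log (by norm_num)]
  have hrpow : D ^ (-(m:ℝ)/((m:ℝ)+2)) = Real.exp (Real.log D * (-(m:ℝ)/((m:ℝ)+2))) :=
    Real.rpow_def_of_pos hD0 _
  rw [h2N, hrpow, ← Real.exp_add]
  -- now pure real arithmetic
  clear_value t r S C Q D B N
  clear hD hrw hDrw ha h2N hrpow htdef hrdef hSdef hCdef hQdef hDdef hDeq hNdef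
  have hlogD0 : 0 ≤ Real.log D := Real.log_nonneg hD1.le
  have hlogD : Real.log D ≤ D := (Real.log_le_sub_one_of_pos hD0).trans (by linarith)
  have hα1 : (m:ℝ)/((m:ℝ)+2) ≤ 1 := by
    rw [div_le_one (by positivity)]
    linarith
  have boundα : (m:ℝ)/((m:ℝ)+2) * Real.log D ≤ D :=
    (mul_le_of_le_one_left hlogD0 hα1).trans hlogD
  have boundD : D ≤ 2*(t*D) := by
    nlinarith [mul_pos (by linarith : (0:ℝ) < 2*t-1) hD0]
  have bound1 : t * D ≤ B/Q := by
    rw [htD, hBdef]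
    gcongr
  have key0' : t * Q < (T:ℝ) * (r^m * r^2) := by rw [← hrsplit]; exact key0
  have boundN : (N:ℝ) * Real.log 2 ≤ B * S/Q := by
    rw [hBdef, le_div_iff₀ hQ0]
    have s1 : (N:ℝ) * (Real.log 2 * Q) ≤ (N:ℝ) * (t*Q) :=
      mul_le_mul_of_nonneg_left (by nlinarith) (Nat.cast_nonneg N)
    have s2 : (N:ℝ) * (t*Q) ≤ (N:ℝ) * ((T:ℝ)*(r^m*r^2)) :=
      mul_le_mul_of_nonneg_left key0'.le (Nat.cast_nonneg N)
    have s3 : (N:ℝ) * ((T:ℝ)*(r^m*r^2)) = ((N:ℝ)*r^m) * ((T:ℝ)*r^2) := by ring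
    have s4 : ((N:ℝ)*r^m) * ((T:ℝ)*r^2) ≤ S * ((T:ℝ)*r^2) :=
      mul_le_mul_of_nonneg_right hKrS (by positivity)
    nlinarith
  obtain ⟨d1, d2, d3⟩ := aux_div B Q S hB0.le hQ0 hS1 hQ128
  have hfinal : (N:ℝ) * Real.log 2 + -(B/32)
      ≤ Real.log D * (-(m:ℝ)/((m:ℝ)+2)) + -t*(1*D - 1) := by
    have e1 : Real.log D * (-(m:ℝ)/((m:ℝ)+2)) = -((m:ℝ)/((m:ℝ)+2) * Real.log D) := by
      ring
    have e2 : -t*(1*D - 1) = t - t*D := by ring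
    rw [e1, e2]
    linarith
  calc Real.exp ((N:ℝ) * Real.log 2 + -(B/32))
      ≤ Real.exp (Real.log D * (-(m:ℝ)/((m:ℝ)+2)) + -t*(1*D - 1)) := Real.exp_le_exp.2 hfinal
    _ ≤ 2 * Real.exp (Real.log D * (-(m:ℝ)/((m:ℝ)+2)) + -t*(1*D - 1)) := by
        nlinarith [Real.exp_pos (Real.log D * (-(m:ℝ)/((m:ℝ)+2)) + -t*(1*D - 1))]
    _ = 2 * Real.exp (Real.log D * (-(m:ℝ)/((m:ℝ)+2))) * Real.exp (-t*(1*D - 1)) := by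
        rw [mul_assoc, ← Real.exp_add]

/-- Uniform deviation (discrepancy) bound for the class of `L`-Lipschitz functions
on `[0,1]^m` under i.i.d. sampling. -/

theorem stmt_5 (m : ℕ) (hm : 0 < m) :
    ∃ C₁ C₂ : ℝ, 0 < C₁ ∧ 0 < C₂ ∧
      ∀ {Ω : Type} [MeasurableSpace Ω] (P : Measure Ω) [IsProbabilityMeasure P]
        (T : ℕ), 1 < T →
        ∀ (X : ℕ → Ω → (Fin m → ℝ)),
          (∀ i, Measurable (X i)) →
          (∀ i ω, X i ω ∈ Set.Icc (0 : Fin m → ℝ) 1) →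
          iIndepFun X P →
          (∀ i, Measure.map (X i) P = Measure.map (X 0) P) →
          ∀ (L ε : ℝ), 0 < L → 0 < ε →
            P {ω | ε < ⨆ f : {f : (Fin m → ℝ) → ℝ //
                  ∀ x ∈ Set.Icc (0 : Fin m → ℝ) 1, ∀ y ∈ Set.Icc (0 : Fin m → ℝ) 1,
                    |f x - f y| ≤ L * ‖x - y‖},
                |(1 / (T : ℝ)) * ∑ i ∈ range T, (f : (Fin m → ℝ) → ℝ) (X i ω)
                  - ∫ ω', (f : (Fin m → ℝ) → ℝ) (X 0 ω') ∂P|}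
              ≤ ENNReal.ofReal
                  (2 * ((T / Real.log T) * (ε / (C₂ * L)) ^ ((m : ℝ) + 2))
                        ^ (-(m : ℝ) / ((m : ℝ) + 2))
                    * Real.exp (-(Real.log T)
                        * (C₁ * ((T / Real.log T) * (ε / (C₂ * L)) ^ ((m : ℝ) + 2)) - 1))) := by
  refine ⟨1, 128*6^m, one_pos, by positivity, ?_⟩
  intro Ω _inst P _instP T hT X hXm hXicc hindep hident L ε hL hε
  have hT0 : 0 < T := by omega
  have hT1 : (1:ℝ) < (T:ℝ) := by exact_mod_cast hT
  have hT2 : (2:ℝ) ≤ (T:ℝ) := by exact_mod_cast hT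
  have ht : 0 < Real.log T := Real.log_pos hT1
  set ι := {f : (Fin m → ℝ) → ℝ //
      ∀ x ∈ Set.Icc (0 : Fin m → ℝ) 1, ∀ y ∈ Set.Icc (0 : Fin m → ℝ) 1,
        |f x - f y| ≤ L * ‖x - y‖} with hι
  -- clamped versions and their properties
  have hFlip : ∀ f : ι, ∀ x y, |(f : (Fin m → ℝ) → ℝ) (aux_clamp m x)
      - (f : (Fin m → ℝ) → ℝ) (aux_clamp m y)| ≤ L * ‖x - y‖ := by
    intro f x y
    calc |(f : (Fin m → ℝ) → ℝ) (aux_clamp m x) - (f : (Fin m → ℝ) → ℝ) (aux_clamp m y)|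
        ≤ L * ‖aux_clamp m x - aux_clamp m y‖ :=
          f.2 _ (aux_clamp_mem m x) _ (aux_clamp_mem m y)
      _ ≤ L * ‖x - y‖ := mul_le_mul_of_nonneg_left (aux_clamp_lip m x y) hL.le
  have hsum_eq : ∀ (f : ι) ω, ∑ i ∈ range T, (f : (Fin m → ℝ) → ℝ) (X i ω)
      = ∑ i ∈ range T, (f : (Fin m → ℝ) → ℝ) (aux_clamp m (X i ω)) :=
    fun f ω => Finset.sum_congr rfl (fun i _ => by rw [aux_clamp_eq m _ (hXicc i ω)])
  have hint_eq : ∀ (f : ι), ∫ ω', (f : (Fin m → ℝ) → ℝ) (X 0 ω') ∂P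
      = ∫ ω', (f : (Fin m → ℝ) → ℝ) (aux_clamp m (X 0 ω')) ∂P :=
    fun f => integral_congr_ae (Filter.Eventually.of_forall
      (fun ω' => show ((f : (Fin m → ℝ) → ℝ) (X 0 ω') : ℝ)
          = (f : (Fin m → ℝ) → ℝ) (aux_clamp m (X 0 ω')) by
        rw [aux_clamp_eq m _ (hXicc 0 ω')]))
  set Dstat : ℝ := ((T:ℝ) / Real.log T) * (ε / ((128*6^m : ℝ) * L)) ^ ((m : ℝ) + 2)
    with hDstat
  have hD0 : 0 < Dstat := by
    refine mul_pos (div_pos (by positivity) ht) (Real.rpow_pos_of_pos (by positivity) _)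
  rcases le_or_gt Dstat 1 with hcase | hcase
  · -- trivial regime : RHS ≥ 1
    have h1 : (1:ℝ) ≤ Dstat ^ (-(m : ℝ) / ((m : ℝ) + 2)) := by
      refine Real.one_le_rpow_of_pos_of_le_one_of_nonpos hD0 hcase ?_
      rw [neg_div]
      simp only [Left.neg_nonpos_iff]
      positivity
    have h2 : (1:ℝ) ≤ Real.exp (-(Real.log T) * (1 * Dstat - 1)) := by
      rw [Real.one_le_exp_iff]
      nlinarith
    calc P _ ≤ 1 := prob_le_one
      _ ≤ ENNReal.ofReal (2 * Dstat ^ (-(m : ℝ) / ((m : ℝ) + 2))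
            * Real.exp (-(Real.log T) * (1 * Dstat - 1))) :=
          ENNReal.one_le_ofReal.2 (by nlinarith)
  · rcases le_or_gt L ε with hLε | hεL
    · -- empty event
      have hempty : {ω | ε < ⨆ f : ι,
          |(1 / (T : ℝ)) * ∑ i ∈ range T, (f : (Fin m → ℝ) → ℝ) (X i ω)
            - ∫ ω', (f : (Fin m → ℝ) → ℝ) (X 0 ω') ∂P|} = ∅ := by
        refine Set.eq_empty_iff_forall_notMem.2 (fun ω hω => ?_)
        simp only [Set.mem_setOf_eq] at hω
        have hsup : (⨆ f : ι,
            |(1 / (T : ℝ)) * ∑ i ∈ range T, (f : (Fin m → ℝ) → ℝ) (X i ω)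
              - ∫ ω', (f : (Fin m → ℝ) → ℝ) (X 0 ω') ∂P|) ≤ L := by
          refine Real.iSup_le (fun f => ?_) hL.le
          rw [hsum_eq f ω, hint_eq f]
          exact aux_triv P m T hT0 X hXm hXicc L hL _ (hFlip f) ω
        linarith
      rw [hempty]
      simp
    · -- main regime
      set K : ℕ := ⌈4*L/ε⌉₊ with hK
      have hK1 : 4*L/ε ≤ (K:ℝ) := Nat.le_ceil _
      have hK1' : 4*L ≤ ((K:ℝ)+1) * ε := by
        rw [div_le_iff₀ hε] at hK1
        nlinarith
      have hhalf : 2*L/((K:ℝ)+1) ≤ ε/2 := by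
        rw [div_le_iff₀ (by positivity)]
        nlinarith
      have hK2 : ((K:ℝ)+1) ≤ 6*L/ε := by
        have hc : (K:ℝ) < 4*L/ε + 1 := Nat.ceil_lt_add_one (by positivity)
        have h2' : (2:ℝ) ≤ 2*L/ε := by
          rw [le_div_iff₀ hε]
          linarith
        have h46 : 4*L/ε + 2*L/ε = 6*L/ε := by ring
        linarith
      set a : ℝ := ε/(2*L) with ha
      have ha0 : 0 ≤ a := by positivity
      have hLa : L * a = ε/2 := by
        rw [ha]
        field_simp
      -- event inclusion
      have hincl : {ω | ε < ⨆ f : ι,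
          |(1 / (T : ℝ)) * ∑ i ∈ range T, (f : (Fin m → ℝ) → ℝ) (X i ω)
            - ∫ ω', (f : (Fin m → ℝ) → ℝ) (X 0 ω') ∂P|}
          ⊆ {ω | a ≤ ∑ c : Fin m → Fin (K+1),
              |aux_nu m K T X ω c - aux_pp m K P (X 0) c|} := by
        intro ω hω
        simp only [Set.mem_setOf_eq] at hω ⊢
        set Sω : ℝ := ∑ c : Fin m → Fin (K+1),
            |aux_nu m K T X ω c - aux_pp m K P (X 0) c| with hSω
        have hS0 : 0 ≤ Sω := Finset.sum_nonneg (fun c _ => abs_nonneg _)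
        have hsup : (⨆ f : ι,
            |(1 / (T : ℝ)) * ∑ i ∈ range T, (f : (Fin m → ℝ) → ℝ) (X i ω)
              - ∫ ω', (f : (Fin m → ℝ) → ℝ) (X 0 ω') ∂P|)
            ≤ 2*L/((K:ℝ)+1) + L * Sω := by
          refine Real.iSup_le (fun f => ?_) (by positivity)
          rw [hsum_eq f ω, hint_eq f]
          exact aux_dev P m K T hT0 X hXm hXicc L hL _ (hFlip f) ω
        have hstrict : L * a < L * Sω := by
          rw [hLa]
          linarith
        exact ((mul_lt_mul_iff_right₀ hL).1 hstrict).le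
      calc P _ ≤ P {ω | a ≤ ∑ c : Fin m → Fin (K+1),
            |aux_nu m K T X ω c - aux_pp m K P (X 0) c|} := measure_mono hincl
        _ ≤ ENNReal.ofReal ((2:ℝ)^((K+1)^m) * Real.exp (-(T:ℝ)*a^2/8)) :=
            aux_union P m K T hT0 X hXm hindep hident a ha0
        _ ≤ ENNReal.ofReal (2 * Dstat ^ (-(m : ℝ) / ((m : ℝ) + 2))
              * Real.exp (-(Real.log T) * (1 * Dstat - 1))) := by
            refine ENNReal.ofReal_le_ofReal ?_
            rw [ha, hDstat]
            exact aux_calc m K T L ε hm hL hε hεL hT2 hK2 (by rw [hDstat] at hcase; exact hcase)
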